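/- arXiv:1603.09144 — 4 statements merged into one kernel-verified Lean document; each statement's English description precedes it below -/
import Mathlib

section
/- Let Y_1,...,Y_p be independent with E(Y_i)=θ_i, Var(Y_i)=V(θ_i)/τ_i where V(θ)=ν_0+ν_1θ+ν_2θ² and τ_i+ν_2>0. For fixed b∈[0,1]^p and μ∈ℝ, define the shrinkage estimator θ̂_i = (1−b_i)Y_i + b_i μ and URE(b,μ) = (1/p)Σ_i [b_i²(Y_i−μ)² + (1−2b_i)V(Y_i)/(τ_i+ν_2)]. Then E[URE(b,μ)] = (1/p)Σ_i E[(θ̂_i−θ_i)²], i.e., URE is an unbiased estimate of the risk. -/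
open MeasureTheory ProbabilityTheory

/-
Each summand of the URE and of the loss is a quadratic polynomial in a single `Y i`, and the
expectation of `a + b (X - m) + c (X - m)²`, with `m` the mean of `X`, is `a + c Var X`.
For the variance function this gives `E V(Y) = V(θ) + ν₂ Var Y = V(θ) (τ + ν₂) / τ`, so
`V(Y) / (τ + ν₂)` is an unbiased estimate of `Var Y = V(θ) / τ`; the two sides then agree
coordinatewise by the bias-variance decomposition of `(1 - b) (Y - θ) + b (μ₀ - θ)`.
-/

section Quadratic

variable {Ω : Type*} [MeasurableSpace Ω] {μ : Measure Ω} {X : Ω → ℝ}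

lemma MeasureTheory.MemLp.integrable_centered_quadratic [IsFiniteMeasure μ] (hX : MemLp X 2 μ)
    (a b c t : ℝ) :
    Integrable (fun ω => a + b * (X ω - t) + c * (X ω - t) ^ 2) μ := by
  have hXt : MemLp (fun ω => X ω - t) 2 μ := hX.sub (memLp_const t)
  exact ((integrable_const a).add ((hXt.integrable one_le_two).const_mul b)).add
    (hXt.integrable_sq.const_mul c)

lemma MeasureTheory.MemLp.integral_centered_quadratic [IsProbabilityMeasure μ] (hX : MemLp X 2 μ)
    (a b c : ℝ) :
    ∫ ω, (a + b * (X ω - μ[X]) + c * (X ω - μ[X]) ^ 2) ∂μ = a + c * variance X μ := by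
  have hXm : MemLp (fun ω => X ω - μ[X]) 2 μ := hX.sub (memLp_const _)
  have hlin : Integrable (fun ω => b * (X ω - μ[X])) μ :=
    (hXm.integrable one_le_two).const_mul b
  have hsq : Integrable (fun ω => c * (X ω - μ[X]) ^ 2) μ := hXm.integrable_sq.const_mul c
  have hcentered : ∫ ω, (X ω - μ[X]) ∂μ = 0 := by
    rw [integral_sub (hX.integrable one_le_two) (integrable_const _)]
    simp
  have hconst_lin : Integrable (fun ω => a + b * (X ω - μ[X])) μ :=
    (integrable_const a).add hlin
  rw [integral_add hconst_lin hsq, integral_add (integrable_const a) hlin,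
    integral_const_mul, integral_const_mul, hcentered,
    variance_eq_integral hX.aestronglyMeasurable.aemeasurable]
  simp

end Quadratic

section Coordinate

variable {Ω : Type*} [MeasurableSpace Ω] {μ : Measure Ω} {X : Ω → ℝ}
  (ν0 ν1 ν2 τ b μ0 : ℝ)

lemma integrable_ure_summand [IsFiniteMeasure μ] (hX : MemLp X 2 μ) :
    Integrable (fun ω => b ^ 2 * (X ω - μ0) ^ 2
      + (1 - 2 * b) * ((ν0 + ν1 * X ω + ν2 * X ω ^ 2) / (τ + ν2))) μ :=
  (hX.integrable_centered_quadratic (b ^ 2 * μ0 ^ 2 + (1 - 2 * b) * ν0 / (τ + ν2))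
    (-2 * b ^ 2 * μ0 + (1 - 2 * b) * ν1 / (τ + ν2)) (b ^ 2 + (1 - 2 * b) * ν2 / (τ + ν2))
    0).congr (.of_forall fun ω => by ring)

lemma integrable_shrinkage_sq_error [IsFiniteMeasure μ] (hX : MemLp X 2 μ) (θ : ℝ) :
    Integrable (fun ω => ((1 - b) * X ω + b * μ0 - θ) ^ 2) μ :=
  (hX.integrable_centered_quadratic ((b * μ0 - θ) ^ 2) (2 * (1 - b) * (b * μ0 - θ))
    ((1 - b) ^ 2) 0).congr (.of_forall fun ω => by ring)

lemma integral_ure_summand [IsProbabilityMeasure μ] (hX : MemLp X 2 μ) :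
    ∫ ω, (b ^ 2 * (X ω - μ0) ^ 2
      + (1 - 2 * b) * ((ν0 + ν1 * X ω + ν2 * X ω ^ 2) / (τ + ν2))) ∂μ
      = b ^ 2 * (μ[X] - μ0) ^ 2
        + (1 - 2 * b) * ((ν0 + ν1 * μ[X] + ν2 * μ[X] ^ 2) / (τ + ν2))
        + (b ^ 2 + (1 - 2 * b) * ν2 / (τ + ν2)) * variance X μ := by
  rw [← hX.integral_centered_quadratic _
    (2 * b ^ 2 * (μ[X] - μ0) + (1 - 2 * b) * (ν1 + 2 * ν2 * μ[X]) / (τ + ν2))]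
  congr 1 with ω
  ring

lemma integral_shrinkage_sq_error [IsProbabilityMeasure μ] (hX : MemLp X 2 μ) :
    ∫ ω, ((1 - b) * X ω + b * μ0 - μ[X]) ^ 2 ∂μ
      = b ^ 2 * (μ0 - μ[X]) ^ 2 + (1 - b) ^ 2 * variance X μ := by
  rw [← hX.integral_centered_quadratic _ (2 * b * (1 - b) * (μ0 - μ[X]))]
  congr 1 with ω
  ring

lemma integral_ure_summand_eq_integral_shrinkage_sq_error [IsProbabilityMeasure μ]
    (hX : MemLp X 2 μ) {θ : ℝ} (hτ : τ ≠ 0) (hτν : τ + ν2 ≠ 0) (hmean : μ[X] = θ)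
    (hvar : variance X μ = (ν0 + ν1 * θ + ν2 * θ ^ 2) / τ) :
    ∫ ω, (b ^ 2 * (X ω - μ0) ^ 2
      + (1 - 2 * b) * ((ν0 + ν1 * X ω + ν2 * X ω ^ 2) / (τ + ν2))) ∂μ
      = ∫ ω, ((1 - b) * X ω + b * μ0 - θ) ^ 2 ∂μ := by
  subst hmean
  rw [integral_ure_summand ν0 ν1 ν2 τ b μ0 hX, integral_shrinkage_sq_error b μ0 hX, hvar]
  field_simp
  ring

end Coordinate

theorem stmt1_general {Ω : Type*} [MeasurableSpace Ω] (μ : Measure Ω) [IsProbabilityMeasure μ]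
    (p : ℕ) (Y : Fin p → Ω → ℝ) (θ τ : Fin p → ℝ) (ν0 ν1 ν2 : ℝ)
    (hτ : ∀ i, 0 < τ i) (hτν : ∀ i, 0 < τ i + ν2)
    (hL2 : ∀ i, MemLp (Y i) 2 μ)
    (hmean : ∀ i, ∫ ω, Y i ω ∂μ = θ i)
    (hvar : ∀ i, variance (Y i) μ = (ν0 + ν1 * θ i + ν2 * θ i ^ 2) / τ i)
    (b : Fin p → ℝ) (μ0 : ℝ) :
    ∫ ω, (1 / (p:ℝ)) * ∑ i, (b i ^ 2 * (Y i ω - μ0) ^ 2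
        + (1 - 2 * b i) * ((ν0 + ν1 * Y i ω + ν2 * Y i ω ^ 2) / (τ i + ν2))) ∂μ
      = ∫ ω, (1 / (p:ℝ)) * ∑ i, (((1 - b i) * Y i ω + b i * μ0) - θ i) ^ 2 ∂μ := by
  rw [integral_const_mul, integral_const_mul,
    integral_finsetSum _ fun i _ => integrable_ure_summand ν0 ν1 ν2 (τ i) (b i) μ0 (hL2 i),
    integral_finsetSum _ fun i _ => integrable_shrinkage_sq_error (b i) μ0 (hL2 i) (θ i)]
  congr 1
  exact Finset.sum_congr rfl fun i _ =>
    integral_ure_summand_eq_integral_shrinkage_sq_error ν0 ν1 ν2 (τ i) (b i) μ0 (hL2 i)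
      (hτ i).ne' (hτν i).ne' (hmean i) (hvar i)

/-- URE(b, μ0) is an unbiased estimate of the risk of the
shrinkage estimator `θ̂ i = (1 - b i) * Y i + b i * μ0`. -/
theorem stmt1 {Ω : Type*} [MeasurableSpace Ω] (μ : Measure Ω) [IsProbabilityMeasure μ]
    (p : ℕ) (hp : 0 < p) (Y : Fin p → Ω → ℝ) (θ τ : Fin p → ℝ) (ν0 ν1 ν2 : ℝ)
    (hind : iIndepFun Y μ)
    (hτ : ∀ i, 0 < τ i) (hτν : ∀ i, 0 < τ i + ν2)
    (hL2 : ∀ i, MemLp (Y i) 2 μ)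
    (hmean : ∀ i, ∫ ω, Y i ω ∂μ = θ i)
    (hvar : ∀ i, variance (Y i) μ = (ν0 + ν1 * θ i + ν2 * θ i ^ 2) / τ i)
    (b : Fin p → ℝ) (hb : ∀ i, b i ∈ Set.Icc (0:ℝ) 1) (μ0 : ℝ) :
    ∫ ω, (1 / (p:ℝ)) * ∑ i, (b i ^ 2 * (Y i ω - μ0) ^ 2
        + (1 - 2 * b i) * ((ν0 + ν1 * Y i ω + ν2 * Y i ω ^ 2) / (τ i + ν2))) ∂μ
      = ∫ ω, (1 / (p:ℝ)) * ∑ i, (((1 - b i) * Y i ω + b i * μ0) - θ i) ^ 2 ∂μ :=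
  stmt1_general μ p Y θ τ ν0 ν1 ν2 hτ hτν hL2 hmean hvar b μ0
end

section
/- Let Y_1,...,Y_p be independent with mean θ_i and variance V(θ_i)/τ_i, V quadratic as above, τ_i+ν_2>0. For fixed b∈[0,1]^p, define θ̂_i^{b,Ȳ} = (1−b_i)Y_i + b_i Ȳ with Ȳ = (1/p)Σ_j Y_j, and URE^G(b) = (1/p)Σ_i [b_i²(Y_i−Ȳ)² + (1−2(1−1/p)b_i)V(Y_i)/(τ_i+ν_2)]. Then E[URE^G(b)] equals the risk E[(1/p)Σ_i(θ̂_i^{b,Ȳ}−θ_i)²]. -/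
/-!
Write `Ȳ` for the grand mean and `U i = Y i - Ȳ`. Since
`(1 - b) Y i + b Ȳ - θ i = (Y i - θ i) - b U i`, the risk summand has expectation
`Var (Y i) - 2 b Cov (Y i, U i) + b² 𝔼 (U i)²`, and independence gives
`Cov (Y i, U i) = (1 - 1/p) Var (Y i)`. On the other side, for the quadratic variance function
`V`, `𝔼 V(Y i) = V(θ i) + ν₂ Var (Y i) = (τ i + ν₂) Var (Y i)`, so `V(Y i) / (τ i + ν₂)` is an
unbiased estimate of `Var (Y i)`. The two expectations therefore agree summand by summand.
-/

open MeasureTheory ProbabilityTheory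

namespace ProbabilityTheory

variable {Ω : Type*} [MeasurableSpace Ω] {μ : Measure Ω} {X U : Ω → ℝ}

lemma _root_.MeasureTheory.MemLp.integrable_quadratic [IsFiniteMeasure μ] (hX : MemLp X 2 μ)
    (a₀ a₁ a₂ : ℝ) : Integrable (fun ω ↦ a₀ + a₁ * X ω + a₂ * X ω ^ 2) μ :=
  ((integrable_const a₀).add ((hX.integrable one_le_two).const_mul a₁)).add
    (hX.integrable_sq.const_mul a₂)

section GrandMean

variable {ι : Type*} [Fintype ι] {Y : ι → Ω → ℝ}

noncomputable def grandMean (Y : ι → Ω → ℝ) (ω : Ω) : ℝ :=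
  (1 / (Fintype.card ι : ℝ)) * ∑ j, Y j ω

lemma memLp_grandMean (hY : ∀ i, MemLp (Y i) 2 μ) : MemLp (grandMean Y) 2 μ :=
  (memLp_finsetSum _ fun j _ ↦ hY j).const_mul _

end GrandMean

variable [IsProbabilityMeasure μ]

lemma integral_quadratic (hX : MemLp X 2 μ) (a₀ a₁ a₂ : ℝ) :
    ∫ ω, (a₀ + a₁ * X ω + a₂ * X ω ^ 2) ∂μ = a₀ + a₁ * μ[X] + a₂ * (μ[X] ^ 2 + Var[X; μ]) := by
  have hX₁ : Integrable (fun ω ↦ a₁ * X ω) μ := (hX.integrable one_le_two).const_mul a₁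
  have hX₂ : Integrable (fun ω ↦ a₂ * X ω ^ 2) μ := hX.integrable_sq.const_mul a₂
  rw [integral_add ((integrable_const a₀).fun_add hX₁) hX₂, integral_add (integrable_const a₀) hX₁,
    integral_const_mul, integral_const_mul, integral_const, variance_eq_sub hX]
  simp only [probReal_univ, one_smul, Pi.pow_apply]
  ring

lemma integral_quadratic_div_eq_variance (hX : MemLp X 2 μ) {ν₀ ν₁ ν₂ τ θ : ℝ}
    (hτ : τ ≠ 0) (hτν : τ + ν₂ ≠ 0) (hmean : μ[X] = θ)
    (hvar : Var[X; μ] = (ν₀ + ν₁ * θ + ν₂ * θ ^ 2) / τ) :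
    ∫ ω, (ν₀ + ν₁ * X ω + ν₂ * X ω ^ 2) / (τ + ν₂) ∂μ = Var[X; μ] := by
  rw [integral_div, integral_quadratic hX, hmean, div_eq_iff hτν]
  rw [eq_div_iff hτ] at hvar
  linear_combination -hvar

lemma integral_sub_mean_mul (hX : MemLp X 2 μ) (hU : MemLp U 2 μ) :
    ∫ ω, (X ω - μ[X]) * U ω ∂μ = cov[X, U; μ] := by
  have hXU : Integrable (fun ω ↦ X ω * U ω) μ := hX.integrable_mul hU
  simp_rw [sub_mul]
  rw [integral_sub hXU ((hU.integrable one_le_two).const_mul _), integral_const_mul,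
    covariance_eq_sub hX hU]
  rfl

lemma integral_sub_mean_sub_mul_sq (hX : MemLp X 2 μ) (hU : MemLp U 2 μ) (b : ℝ) :
    ∫ ω, (X ω - μ[X] - b * U ω) ^ 2 ∂μ
      = Var[X; μ] - 2 * b * cov[X, U; μ] + b ^ 2 * ∫ ω, U ω ^ 2 ∂μ := by
  have hXc : MemLp (fun ω ↦ X ω - μ[X]) 2 μ := hX.sub (memLp_const _)
  have hexpand : (fun ω ↦ (X ω - μ[X] - b * U ω) ^ 2) = fun ω ↦
      ((X ω - μ[X]) ^ 2 - 2 * b * ((X ω - μ[X]) * U ω)) + b ^ 2 * U ω ^ 2 := by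
    ext ω; ring
  have hXcU : Integrable (fun ω ↦ 2 * b * ((X ω - μ[X]) * U ω)) μ :=
    (hXc.integrable_mul hU).const_mul _
  have hdiff : Integrable (fun ω ↦ (X ω - μ[X]) ^ 2 - 2 * b * ((X ω - μ[X]) * U ω)) μ :=
    hXc.integrable_sq.sub hXcU
  rw [hexpand, integral_add hdiff (hU.integrable_sq.const_mul _),
    integral_sub hXc.integrable_sq hXcU, integral_const_mul, integral_const_mul,
    integral_sub_mean_mul hX hU, variance_eq_integral hX.aemeasurable]

variable {ι : Type*} [Fintype ι] {Y : ι → Ω → ℝ}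

lemma covariance_sub_grandMean (hind : Pairwise fun i j ↦ Y i ⟂ᵢ[μ] Y j)
    (hY : ∀ i, MemLp (Y i) 2 μ) (i : ι) :
    cov[Y i, fun ω ↦ Y i ω - grandMean Y ω; μ] = (1 - 1 / (Fintype.card ι : ℝ)) * Var[Y i; μ] := by
  have hsum : cov[Y i, fun ω ↦ ∑ j, Y j ω; μ] = Var[Y i; μ] := by
    rw [covariance_fun_sum_right hY (hY i), Finset.sum_eq_single i
      (fun j _ hji ↦ (hind hji.symm).covariance_eq_zero (hY i) (hY j)) (by simp),
      covariance_self (hY i).aemeasurable]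
  rw [covariance_fun_sub_right (hY i) (hY i) (memLp_grandMean hY)]
  unfold grandMean
  rw [covariance_const_mul_right, hsum, covariance_self (hY i).aemeasurable]
  ring

lemma integral_ure_summand_eq_integral_risk_summand (hind : Pairwise fun i j ↦ Y i ⟂ᵢ[μ] Y j)
    (hY : ∀ i, MemLp (Y i) 2 μ) (i : ι) {ν₀ ν₁ ν₂ τ θ : ℝ} (hτ : τ ≠ 0) (hτν : τ + ν₂ ≠ 0)
    (hmean : μ[Y i] = θ) (hvar : Var[Y i; μ] = (ν₀ + ν₁ * θ + ν₂ * θ ^ 2) / τ) (b : ℝ) :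
    ∫ ω, (b ^ 2 * (Y i ω - grandMean Y ω) ^ 2 + (1 - 2 * (1 - 1 / (Fintype.card ι : ℝ)) * b)
        * ((ν₀ + ν₁ * Y i ω + ν₂ * Y i ω ^ 2) / (τ + ν₂))) ∂μ
      = ∫ ω, ((1 - b) * Y i ω + b * grandMean Y ω - θ) ^ 2 ∂μ := by
  have hU : MemLp (fun ω ↦ Y i ω - grandMean Y ω) 2 μ := (hY i).sub (memLp_grandMean hY)
  have hrisk : (fun ω ↦ ((1 - b) * Y i ω + b * grandMean Y ω - θ) ^ 2)
      = fun ω ↦ (Y i ω - μ[Y i] - b * (Y i ω - grandMean Y ω)) ^ 2 := by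
    ext ω; rw [hmean]; ring
  have hV : Integrable (fun ω ↦ (ν₀ + ν₁ * Y i ω + ν₂ * Y i ω ^ 2) / (τ + ν₂)) μ :=
    ((hY i).integrable_quadratic ν₀ ν₁ ν₂).div_const _
  rw [hrisk, integral_sub_mean_sub_mul_sq (hY i) hU, covariance_sub_grandMean hind hY,
    integral_add (hU.integrable_sq.const_mul _) (hV.const_mul _), integral_const_mul,
    integral_const_mul, integral_quadratic_div_eq_variance (hY i) hτ hτν hmean hvar]
  ring

end ProbabilityTheory

theorem stmt2_general {Ω : Type*} [MeasurableSpace Ω] (μ : Measure Ω) [IsProbabilityMeasure μ]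
    (p : ℕ) (Y : Fin p → Ω → ℝ) (θ τ : Fin p → ℝ) (ν0 ν1 ν2 : ℝ)
    (hind : iIndepFun Y μ)
    (hτ : ∀ i, 0 < τ i) (hτν : ∀ i, 0 < τ i + ν2)
    (hL2 : ∀ i, MemLp (Y i) 2 μ)
    (hmean : ∀ i, ∫ ω, Y i ω ∂μ = θ i)
    (hvar : ∀ i, variance (Y i) μ = (ν0 + ν1 * θ i + ν2 * θ i ^ 2) / τ i)
    (b : Fin p → ℝ) :
    ∫ ω, (1 / (p:ℝ)) * ∑ i, (b i ^ 2 * (Y i ω - (1 / (p:ℝ)) * ∑ j, Y j ω) ^ 2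
        + (1 - 2 * (1 - 1 / (p:ℝ)) * b i)
            * ((ν0 + ν1 * Y i ω + ν2 * Y i ω ^ 2) / (τ i + ν2))) ∂μ
      = ∫ ω, (1 / (p:ℝ)) * ∑ i,
          (((1 - b i) * Y i ω + b i * ((1 / (p:ℝ)) * ∑ j, Y j ω)) - θ i) ^ 2 ∂μ := by
  have hbar : ∀ ω, (1 / (p:ℝ)) * ∑ j, Y j ω = grandMean Y ω := fun ω ↦ by
    rw [grandMean, Fintype.card_fin]
  have hbarL2 := memLp_grandMean hL2
  have hsummand (i : Fin p) := integral_ure_summand_eq_integral_risk_summand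
    (fun _ _ h ↦ hind.indepFun h) hL2 i (hτ i).ne' (hτν i).ne' (hmean i) (hvar i) (b i)
  simp only [Fintype.card_fin] at hsummand
  simp only [hbar]
  rw [integral_const_mul, integral_const_mul, integral_finsetSum, integral_finsetSum]
  · simp only [hsummand]
  · exact fun i _ ↦
      ((((hL2 i).const_mul _).add (hbarL2.const_mul _)).sub (memLp_const _)).integrable_sq
  · exact fun i _ ↦ (((hL2 i).sub hbarL2).integrable_sq.const_mul _).add
      ((((hL2 i).integrable_quadratic _ _ _).div_const _).const_mul _)

/-- URE^G(b) is an unbiased estimate of the risk of the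
grand-mean shrinkage estimator `θ̂ i = (1 - b i) * Y i + b i * Ȳ`. -/
theorem stmt2 {Ω : Type*} [MeasurableSpace Ω] (μ : Measure Ω) [IsProbabilityMeasure μ]
    (p : ℕ) (hp : 0 < p) (Y : Fin p → Ω → ℝ) (θ τ : Fin p → ℝ) (ν0 ν1 ν2 : ℝ)
    (hind : iIndepFun Y μ)
    (hτ : ∀ i, 0 < τ i) (hτν : ∀ i, 0 < τ i + ν2)
    (hL2 : ∀ i, MemLp (Y i) 2 μ)
    (hmean : ∀ i, ∫ ω, Y i ω ∂μ = θ i)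
    (hvar : ∀ i, variance (Y i) μ = (ν0 + ν1 * θ i + ν2 * θ i ^ 2) / τ i)
    (b : Fin p → ℝ) (hb : ∀ i, b i ∈ Set.Icc (0:ℝ) 1) :
    ∫ ω, (1 / (p:ℝ)) * ∑ i, (b i ^ 2 * (Y i ω - (1 / (p:ℝ)) * ∑ j, Y j ω) ^ 2
        + (1 - 2 * (1 - 1 / (p:ℝ)) * b i)
            * ((ν0 + ν1 * Y i ω + ν2 * Y i ω ^ 2) / (τ i + ν2))) ∂μ
      = ∫ ω, (1 / (p:ℝ)) * ∑ i,
          (((1 - b i) * Y i ω + b i * ((1 / (p:ℝ)) * ∑ j, Y j ω)) - θ i) ^ 2 ∂μ :=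
  stmt2_general μ p Y θ τ ν0 ν1 ν2 hind hτ hτν hL2 hmean hvar b
end

section
/- For any real numbers a_1,...,a_p and any ordering of indices, sup over all nonincreasing sequences 1 ≥ b_1 ≥ b_2 ≥ ... ≥ b_p ≥ 0 of |Σ_{i=1}^p b_i a_i| equals max over 1 ≤ j ≤ p of |Σ_{i=1}^j a_i|. -/
open Finset

private lemma telescope (B : ℕ → ℝ) (m p : ℕ) (h : m ≤ p) :
    ∑ j ∈ Finset.Ico m p, (B j - B (j+1)) = B m - B p := by
  rw [Finset.sum_Ico_eq_sum_range]
  simp only [Nat.add_assoc]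
  rw [Finset.sum_range_sub' (fun k => B (m + k))]
  simp [Nat.add_sub_cancel' h]

private lemma abel (p : ℕ) (A B : ℕ → ℝ) (hBp : B p = 0) :
    ∑ n ∈ Finset.range p, B n * A n
      = ∑ j ∈ Finset.range p, (B j - B (j+1)) * (∑ i ∈ Finset.range (j+1), A i) := by
  have : ∑ j ∈ Finset.range p, (B j - B (j+1)) * (∑ i ∈ Finset.range (j+1), A i)
      = ∑ j ∈ Finset.range p, ∑ i ∈ Finset.range (j+1), (B j - B (j+1)) * A i := by
    simp [Finset.mul_sum]
  rw [this]
  rw [Finset.sum_comm' (t' := Finset.range p) (s' := fun i => Finset.Ico i p)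
    (by intro x y; simp only [Finset.mem_range, Finset.mem_Ico]; omega)]
  refine Finset.sum_congr rfl fun i hi => ?_
  rw [← Finset.sum_mul, telescope B i p (le_of_lt (Finset.mem_range.mp hi)), hBp]
  ring

/-- the supremum of `|∑ b i * a i|` over nonincreasing weights
`1 ≥ b 1 ≥ ... ≥ b p ≥ 0` equals the maximum over `j` of `|∑_{i ≤ j} a i|`. -/
theorem stmt3 (p : ℕ) (hp : 0 < p) (a : Fin p → ℝ) :
    sSup {x : ℝ | ∃ b : Fin p → ℝ, (∀ i, b i ∈ Set.Icc (0:ℝ) 1) ∧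
        (∀ i j : Fin p, i ≤ j → b j ≤ b i) ∧ x = |∑ i, b i * a i|}
      = ⨆ j : Fin p, |∑ i ∈ Finset.Iic j, a i| := by
  haveI : Nonempty (Fin p) := ⟨⟨0, hp⟩⟩
  set S : Fin p → ℝ := fun j => |∑ i ∈ Finset.Iic j, a i| with hS
  set M : ℝ := ⨆ j : Fin p, S j with hM
  have hbdd : BddAbove (Set.range S) := Set.Finite.bddAbove (Set.finite_range S)
  have hSM : ∀ j, S j ≤ M := fun j => le_ciSup hbdd j
  -- extensions to ℕ
  set A : ℕ → ℝ := fun n => if h : n < p then a ⟨n, h⟩ else 0 with hA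
  -- partial sums bridge
  have bridge : ∀ j : Fin p, ∑ i ∈ Finset.Iic j, a i = ∑ n ∈ Finset.range (j.val+1), A n := by
    intro j
    have h1 : ∑ i ∈ Finset.Iic j, a i = ∑ i : Fin p, if i.val ≤ j.val then A i.val else 0 := by
      rw [← Finset.sum_filter]
      refine Finset.sum_congr ?_ fun i hi => ?_
      · ext i; simp only [Finset.mem_Iic, Finset.mem_filter, Finset.mem_univ, true_and, Fin.le_def]
      · simp [hA, i.isLt]
    rw [h1, Fin.sum_univ_eq_sum_range (fun n => if n ≤ j.val then A n else 0),
      ← Finset.sum_filter]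
    refine Finset.sum_congr ?_ fun i hi => rfl
    ext n; simp only [Finset.mem_filter, Finset.mem_range]
    have := j.isLt; omega
  have hMnonneg : 0 ≤ M := le_trans (abs_nonneg _) (hSM ⟨0, hp⟩)
  apply le_antisymm
  · -- sSup ≤ M : every element of the set is ≤ M
    apply csSup_le
    · -- nonempty: take b = 1 everywhere? simpler: b = 0
      exact ⟨|∑ i : Fin p, (fun _ => (0:ℝ)) i * a i|, fun _ => (0:ℝ), fun _ => by norm_num,
        fun _ _ _ => le_refl 0, rfl⟩
    rintro x ⟨b, hb01, hmono, rfl⟩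
    set B : ℕ → ℝ := fun n => if h : n < p then b ⟨n, h⟩ else 0 with hB
    have hBp : B p = 0 := by simp [hB]
    have h1 : ∑ i : Fin p, b i * a i = ∑ n ∈ Finset.range p, B n * A n := by
      rw [← Fin.sum_univ_eq_sum_range (fun n => B n * A n)]
      refine Finset.sum_congr rfl fun i _ => ?_
      simp [hB, hA, i.isLt]
    rw [h1, abel p A B hBp]
    have key : ∀ j ∈ Finset.range p,
        |(B j - B (j+1)) * (∑ i ∈ Finset.range (j+1), A i)| ≤ (B j - B (j+1)) * M := by
      intro j hj
      have hjp : j < p := Finset.mem_range.mp hj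
      have hc : 0 ≤ B j - B (j+1) := by
        by_cases h : j + 1 < p
        · simp only [hB, dif_pos hjp, dif_pos h]
          exact sub_nonneg.mpr (hmono ⟨j, hjp⟩ ⟨j+1, h⟩ (by simp [Fin.le_def]))
        · simp only [hB, dif_pos hjp, dif_neg h]
          simpa using (hb01 ⟨j, hjp⟩).1
      rw [abs_mul, abs_of_nonneg hc]
      apply mul_le_mul_of_nonneg_left _ hc
      have : |∑ i ∈ Finset.range (j+1), A i| = S ⟨j, hjp⟩ := by
        rw [hS]; simp only; rw [bridge ⟨j, hjp⟩]
      rw [this]; exact hSM _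
    calc |∑ j ∈ Finset.range p, (B j - B (j+1)) * (∑ i ∈ Finset.range (j+1), A i)|
        ≤ ∑ j ∈ Finset.range p, |(B j - B (j+1)) * (∑ i ∈ Finset.range (j+1), A i)| :=
          Finset.abs_sum_le_sum_abs _ _
      _ ≤ ∑ j ∈ Finset.range p, (B j - B (j+1)) * M := Finset.sum_le_sum key
      _ = (B 0 - B p) * M := by
            rw [← Finset.sum_mul, Finset.range_eq_Ico, telescope B 0 p (Nat.zero_le p)]
      _ ≤ 1 * M := by
          apply mul_le_mul_of_nonneg_right _ hMnonneg
          rw [hBp, sub_zero, hB]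
          simp only [dif_pos hp]
          exact (hb01 ⟨0, hp⟩).2
      _ = M := one_mul M
  · -- M ≤ sSup : M is attained by an indicator weight
    obtain ⟨j0, hj0⟩ := exists_eq_ciSup_of_finite (f := S)
    have hgoal : M ∈ {x : ℝ | ∃ b : Fin p → ℝ, (∀ i, b i ∈ Set.Icc (0:ℝ) 1) ∧
        (∀ i j : Fin p, i ≤ j → b j ≤ b i) ∧ x = |∑ i, b i * a i|} := by
      refine ⟨fun i => if i ≤ j0 then 1 else 0, ?_, ?_, ?_⟩
      · intro i; by_cases h : i ≤ j0 <;> simp [h]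
      · intro i j hij
        by_cases hj : j ≤ j0
        · simp [hj, le_trans hij hj]
        · by_cases hi : i ≤ j0 <;> simp [hi, hj]
      · rw [hM, ← hj0]
        show |∑ i ∈ Finset.Iic j0, a i| = _
        congr 1
        simp only [ite_mul, one_mul, zero_mul, ← Finset.sum_filter]
        refine Finset.sum_congr ?_ fun i _ => rfl
        ext i; simp
    have hub : BddAbove {x : ℝ | ∃ b : Fin p → ℝ, (∀ i, b i ∈ Set.Icc (0:ℝ) 1) ∧
        (∀ i j : Fin p, i ≤ j → b j ≤ b i) ∧ x = |∑ i, b i * a i|} := by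
      refine ⟨∑ i : Fin p, |a i|, ?_⟩
      rintro x ⟨b, hb01, _, rfl⟩
      calc |∑ i, b i * a i| ≤ ∑ i, |b i * a i| := Finset.abs_sum_le_sum_abs _ _
        _ ≤ ∑ i : Fin p, |a i| := by
            refine Finset.sum_le_sum fun i _ => ?_
            rw [abs_mul]
            exact mul_le_of_le_one_left (abs_nonneg _) (by
              rw [abs_of_nonneg (hb01 i).1]; exact (hb01 i).2)
    exact le_csSup hub hgoal
end

section
/- Let Y_i = θ_i + Z_i/√τ_i with Z_i i.i.d. mean-zero, variance ν₀, and assume: (i) limsup (1/p)Σ 1/τ_i² < ∞; (ii) limsup (1/p)Σ θ_i²/τ_i < ∞; (iii) limsup (1/p)Σ |θ_i|^{2+ε} < ∞ for some ε>0; (iv) P(|Z| > t) ≤ D t^{−α} with α > 4. Then there exists ε' > 0 such that limsup_{p→∞} p^{−(1−ε')} E(max_{1≤i≤p} Y_i²) < ∞. -/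
/-!
Pointwise `(θ_i + Z_i/√τ_i)² ≤ 2 θ_i² + 2 τ_i⁻¹ Z_i²`, so
`E max_{i<p} Y_i² ≤ 2 max_{i<p} θ_i² + 2 (max_{i<p} 1/τ_i) E max_{i<p} Z_i²`.
A bounded average of nonnegative terms forces each of the first `p` terms to be `O(p)`; hence
(iii) gives `max θ_i² = O(p^{2/(2+ε)})` and (i) gives `max 1/τ_i = O(p^{1/2})`. The tail bound
`P(Z² > t) ≤ D t^{-α/2}` and a union bound give `P(max Z_i² > t) ≤ p D t^{-α/2}`, whose
integral is `E max Z_i² = O(p^{2/α})`. Since `α > 4`, both `2/(2+ε)` and `1/2 + 2/α` are `< 1`.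
-/

open MeasureTheory ProbabilityTheory Filter Set

theorem sq_add_div_sqrt_le (x z : ℝ) {τ : ℝ} (hτ : 0 < τ) :
    (x + z / √τ) ^ 2 ≤ 2 * x ^ 2 + 2 * (1 / τ) * z ^ 2 := by
  have hz : (z / √τ) ^ 2 = 1 / τ * z ^ 2 := by
    rw [div_pow, Real.sq_sqrt hτ.le]
    ring
  nlinarith [sq_nonneg (x - z / √τ)]

theorem ciSup_sq_add_div_sqrt_le {ι : Type*} [Finite ι] [Nonempty ι] {x z τ : ι → ℝ}
    (hτ : ∀ i, 0 < τ i) {A T : ℝ} (hx : ∀ i, x i ^ 2 ≤ A) (hτT : ∀ i, 1 / τ i ≤ T)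
    (hT : 0 ≤ T) :
    ⨆ i, (x i + z i / √(τ i)) ^ 2 ≤ 2 * A + 2 * T * ⨆ i, z i ^ 2 :=
  ciSup_le fun i => calc
    _ ≤ 2 * x i ^ 2 + 2 * (1 / τ i) * z i ^ 2 := sq_add_div_sqrt_le _ _ (hτ i)
    _ ≤ 2 * A + 2 * T * ⨆ i, z i ^ 2 := by
      gcongr
      · exact hx i
      · exact hτT i
      · exact le_ciSup (f := fun i => z i ^ 2) (Set.finite_range _).bddAbove i

theorem exists_forall_le_mul_of_isBoundedUnder_average {f : ℕ → ℝ} (hf : ∀ i, 0 ≤ f i)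
    (h : IsBoundedUnder (· ≤ ·) atTop fun p : ℕ => 1 / (p : ℝ) * ∑ i ∈ Finset.range p, f i) :
    ∃ C, 0 ≤ C ∧ ∀ᶠ p : ℕ in atTop, ∀ i < p, f i ≤ C * p := by
  obtain ⟨C, hC⟩ := h
  refine ⟨max C 0, le_max_right _ _, ?_⟩
  filter_upwards [eventually_map.1 hC, eventually_gt_atTop 0] with p hp hp0 i hi
  have hp0' : (0 : ℝ) < p := by exact_mod_cast hp0
  calc f i ≤ ∑ j ∈ Finset.range p, f j :=
        Finset.single_le_sum (fun j _ => hf j) (Finset.mem_range.2 hi)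
    _ ≤ C * p := by rwa [one_div_mul_eq_div, div_le_iff₀ hp0'] at hp
    _ ≤ max C 0 * p := by gcongr; exact le_max_left _ _

theorem sq_le_rpow_of_abs_rpow_le {x M q : ℝ} (hq : 0 < q) (h : |x| ^ q ≤ M) :
    x ^ 2 ≤ M ^ (2 / q) := calc
  x ^ 2 = (|x| ^ q) ^ (2 / q) := by
    rw [← Real.rpow_mul (abs_nonneg x), mul_div_cancel₀ _ hq.ne', Real.rpow_two, sq_abs]
  _ ≤ M ^ (2 / q) := by gcongr

theorem isBoundedUnder_rpow_neg_mul_of_le_add {g : ℕ → ℝ} {s a b c₁ c₂ : ℝ} (ha : a ≤ s)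
    (hb : b ≤ s) (hc₁ : 0 ≤ c₁) (hc₂ : 0 ≤ c₂)
    (h : ∀ᶠ p : ℕ in atTop, g p ≤ c₁ * (p : ℝ) ^ a + c₂ * (p : ℝ) ^ b) :
    IsBoundedUnder (· ≤ ·) atTop fun p : ℕ => (p : ℝ) ^ (-s) * g p := by
  refine ⟨c₁ + c₂, eventually_map.2 ?_⟩
  filter_upwards [h, eventually_ge_atTop 1] with p hp hp1
  have hp1' : (1 : ℝ) ≤ p := by exact_mod_cast hp1
  have hdecay : ∀ e ≤ s, (p : ℝ) ^ (-s) * (p : ℝ) ^ e ≤ 1 := fun e he => by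
    rw [← Real.rpow_add (by positivity)]
    exact Real.rpow_le_one_of_one_le_of_nonpos hp1' (by linarith)
  calc (p : ℝ) ^ (-s) * g p ≤ (p : ℝ) ^ (-s) * (c₁ * (p : ℝ) ^ a + c₂ * (p : ℝ) ^ b) := by
        gcongr
    _ = c₁ * ((p : ℝ) ^ (-s) * (p : ℝ) ^ a) + c₂ * ((p : ℝ) ^ (-s) * (p : ℝ) ^ b) := by ring
    _ ≤ c₁ * 1 + c₂ * 1 := by gcongr <;> exact hdecay _ ‹_›
    _ = c₁ + c₂ := by ring

section Probability

variable {Ω : Type*} [MeasurableSpace Ω] {μ : Measure Ω}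

theorem lintegral_ofReal_le_of_measure_lt_le_rpow [IsProbabilityMeasure μ] {f : Ω → ℝ}
    (hf0 : 0 ≤ᵐ[μ] f) (hf : AEMeasurable f μ) {c β : ℝ} (hc : 0 < c) (hβ : 1 < β)
    (htail : ∀ t > 0, μ {ω | t < f ω} ≤ ENNReal.ofReal (c * t ^ (-β))) :
    ∫⁻ ω, ENNReal.ofReal (f ω) ∂μ ≤ ENNReal.ofReal (β / (β - 1) * c ^ β⁻¹) := by
  -- split the layer-cake integral where the tail bound `c * t ^ (-β)` drops below `1`
  set t₀ := c ^ β⁻¹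
  have ht₀ : 0 < t₀ := by positivity
  have hexp : -β < -1 := by linarith
  have hhead : ∫⁻ t in Ioc 0 t₀, μ {ω | t < f ω} ≤ ENNReal.ofReal t₀ := calc
    _ ≤ ∫⁻ _ in Ioc 0 t₀, 1 := lintegral_mono fun _ => prob_le_one
    _ = ENNReal.ofReal t₀ := by simp
  have htailInt : ∫⁻ t in Ioi t₀, μ {ω | t < f ω} ≤ ENNReal.ofReal (t₀ / (β - 1)) := calc
    _ ≤ ∫⁻ t in Ioi t₀, ENNReal.ofReal (c * t ^ (-β)) :=
      setLIntegral_mono (by fun_prop) fun t ht => htail t (ht₀.trans ht)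
    _ = ENNReal.ofReal (∫ t in Ioi t₀, c * t ^ (-β)) := by
      refine (ofReal_integral_eq_lintegral_ofReal
        ((integrableOn_Ioi_rpow_of_lt hexp ht₀).const_mul c) ?_).symm
      filter_upwards [ae_restrict_mem measurableSet_Ioi] with t ht
      have : 0 < t := ht₀.trans ht
      positivity
    _ = ENNReal.ofReal (t₀ / (β - 1)) := by
      have hpow : t₀ ^ (-β) = c⁻¹ := by
        rw [Real.rpow_neg ht₀.le, Real.rpow_inv_rpow hc.le (by positivity)]
      rw [integral_const_mul, integral_Ioi_rpow_of_lt hexp ht₀, Real.rpow_add ht₀, hpow,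
        Real.rpow_one]
      congr 1
      have : β - 1 ≠ 0 := by linarith
      have : -β + 1 ≠ 0 := by linarith
      field_simp
      ring
  rw [lintegral_eq_lintegral_meas_lt μ hf0 hf, ← Ioc_union_Ioi_eq_Ioi ht₀.le,
    lintegral_union measurableSet_Ioi (Ioc_disjoint_Ioi le_rfl)]
  calc _ ≤ ENNReal.ofReal t₀ + ENNReal.ofReal (t₀ / (β - 1)) := add_le_add hhead htailInt
    _ = _ := by
      have : β - 1 ≠ 0 := by linarith
      rw [← ENNReal.ofReal_add ht₀.le (div_nonneg ht₀.le (by linarith))]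
      congr 1
      field_simp
      ring

theorem measure_lt_ciSup_le_sum {ι : Type*} [Fintype ι] [Nonempty ι] (f : ι → Ω → ℝ) (t : ℝ) :
    μ {ω | t < ⨆ i, f i ω} ≤ ∑ i, μ {ω | t < f i ω} := by
  refine (measure_mono fun ω hω => ?_).trans (measure_iUnion_fintype_le μ _)
  simpa using (lt_ciSup_iff (Set.finite_range _).bddAbove).1 hω

theorem lintegral_ofReal_ciSup_le_of_measure_lt_le_rpow [IsProbabilityMeasure μ] {ι : Type*}
    [Fintype ι] [Nonempty ι] {f : ι → Ω → ℝ} (hf0 : ∀ i, 0 ≤ f i)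
    (hf : ∀ i, AEMeasurable (f i) μ) {D β : ℝ} (hD : 0 < D) (hβ : 1 < β)
    (htail : ∀ i, ∀ t > 0, μ {ω | t < f i ω} ≤ ENNReal.ofReal (D * t ^ (-β))) :
    ∫⁻ ω, ENNReal.ofReal (⨆ i, f i ω) ∂μ ≤
      ENNReal.ofReal (β / (β - 1) * (Fintype.card ι * D) ^ β⁻¹) := by
  obtain ⟨i₀⟩ := ‹Nonempty ι›
  refine lintegral_ofReal_le_of_measure_lt_le_rpow
    (ae_of_all _ fun ω =>
      (hf0 i₀ ω).trans (le_ciSup (f := fun i => f i ω) (Set.finite_range _).bddAbove i₀))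
    (AEMeasurable.iSup hf) (by positivity) hβ fun t ht => ?_
  calc μ {ω | t < ⨆ i, f i ω} ≤ ∑ i, μ {ω | t < f i ω} := measure_lt_ciSup_le_sum f t
    _ ≤ ∑ _i : ι, ENNReal.ofReal (D * t ^ (-β)) := Finset.sum_le_sum fun i _ => htail i t ht
    _ = ENNReal.ofReal (Fintype.card ι * D * t ^ (-β)) := by
      rw [Finset.sum_const, Finset.card_univ, nsmul_eq_mul, mul_assoc,
        ENNReal.ofReal_mul (Nat.cast_nonneg _), ENNReal.ofReal_natCast]

theorem measure_lt_sq_le_of_measure_lt_abs_le [IsFiniteMeasure μ] {X : Ω → ℝ} {D α : ℝ}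
    (htail : ∀ t > 0, (μ {ω | t < |X ω|}).toReal ≤ D * t ^ (-α)) {t : ℝ} (ht : 0 < t) :
    μ {ω | t < X ω ^ 2} ≤ ENNReal.ofReal (D * t ^ (-(α / 2))) := by
  have hset : {ω | t < X ω ^ 2} = {ω | √t < |X ω|} := by
    ext ω
    simp [← Real.sqrt_lt_sqrt_iff ht.le, Real.sqrt_sq_eq_abs]
  rw [hset, ← ENNReal.ofReal_toReal (measure_ne_top μ _)]
  refine ENNReal.ofReal_le_ofReal ((htail _ (Real.sqrt_pos.2 ht)).trans_eq ?_)
  rw [Real.sqrt_eq_rpow, ← Real.rpow_mul ht.le]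
  ring_nf

theorem integral_le_of_le_add_mul [IsProbabilityMeasure μ] {f g : Ω → ℝ} {a b G : ℝ}
    (hf0 : 0 ≤ f) (hfg : ∀ ω, f ω ≤ a + b * g ω) (ha : 0 ≤ a) (hb : 0 ≤ b) (hG : 0 ≤ G)
    (hg : ∫⁻ ω, ENNReal.ofReal (g ω) ∂μ ≤ ENNReal.ofReal G) :
    ∫ ω, f ω ∂μ ≤ a + b * G := by
  have hf : ∫⁻ ω, ENNReal.ofReal (f ω) ∂μ ≤ ENNReal.ofReal (a + b * G) := calc
    _ ≤ ∫⁻ ω, ENNReal.ofReal a + ENNReal.ofReal b * ENNReal.ofReal (g ω) ∂μ :=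
      lintegral_mono fun ω => (ENNReal.ofReal_le_ofReal (hfg ω)).trans <|
        ENNReal.ofReal_add_le.trans_eq (by rw [ENNReal.ofReal_mul hb])
    _ ≤ ENNReal.ofReal a + ENNReal.ofReal b * ENNReal.ofReal G := by
      rw [lintegral_add_left measurable_const, lintegral_const_mul' _ _ ENNReal.ofReal_ne_top,
        lintegral_const, measure_univ, mul_one]
      gcongr
    _ = ENNReal.ofReal (a + b * G) := by
      rw [ENNReal.ofReal_add ha (by positivity), ENNReal.ofReal_mul hb]
  refine (ENNReal.ofReal_le_ofReal_iff (by positivity)).1 <|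
    (Real.ofReal_le_enorm _).trans <| (enorm_integral_le_lintegral_enorm f).trans ?_
  simpa only [Real.enorm_of_nonneg (hf0 _)] using hf

theorem integral_ciSup_sq_add_div_sqrt_le [IsProbabilityMeasure μ] {ι : Type*} [Fintype ι]
    [Nonempty ι] {Z : ι → Ω → ℝ} (hZ : ∀ i, AEMeasurable (Z i) μ) {x τ : ι → ℝ}
    (hτ : ∀ i, 0 < τ i) {A T D β : ℝ} (hx : ∀ i, x i ^ 2 ≤ A) (hτT : ∀ i, 1 / τ i ≤ T)
    (hD : 0 < D) (hβ : 1 < β)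
    (htail : ∀ i, ∀ t > 0, μ {ω | t < Z i ω ^ 2} ≤ ENNReal.ofReal (D * t ^ (-β))) :
    ∫ ω, ⨆ i, (x i + Z i ω / √(τ i)) ^ 2 ∂μ ≤
      2 * A + 2 * T * (β / (β - 1) * (Fintype.card ι * D) ^ β⁻¹) := by
  obtain ⟨i₀⟩ := ‹Nonempty ι›
  have hT : 0 ≤ T := (one_div_pos.2 (hτ i₀)).le.trans (hτT i₀)
  refine integral_le_of_le_add_mul
    (fun ω => (sq_nonneg _).trans
      (le_ciSup (f := fun i => (x i + Z i ω / √(τ i)) ^ 2) (Set.finite_range _).bddAbove i₀))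
    (fun ω => ciSup_sq_add_div_sqrt_le hτ hx hτT hT)
    (by nlinarith [hx i₀]) (by positivity) ?_
    (lintegral_ofReal_ciSup_le_of_measure_lt_le_rpow (fun i ω => sq_nonneg (Z i ω))
      (fun i => (hZ i).pow_const 2) hD hβ htail)
  have : 0 < β - 1 := by linarith
  positivity

end Probability

theorem stmt11_general {Ω : Type*} [MeasurableSpace Ω] (μ : Measure Ω) [IsProbabilityMeasure μ]
    (Z : ℕ → Ω → ℝ) (θ τ : ℕ → ℝ) (D α : ℝ)
    (hτ : ∀ i, 0 < τ i)
    (hid : ∀ i, IdentDistrib (Z i) (Z 0) μ μ)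
    (hi : IsBoundedUnder (· ≤ ·) atTop
      (fun p : ℕ => (1 / (p:ℝ)) * ∑ i ∈ Finset.range p, 1 / τ i ^ 2))
    (hiii : ∃ ε > (0:ℝ), IsBoundedUnder (· ≤ ·) atTop
      (fun p : ℕ => (1 / (p:ℝ)) * ∑ i ∈ Finset.range p, |θ i| ^ (2 + ε)))
    (hD : 0 < D) (hα : 4 < α)
    (htail : ∀ t > (0:ℝ), (μ {ω | t < |Z 0 ω|}).toReal ≤ D * t ^ (-α)) :
    ∃ ε' > (0:ℝ), IsBoundedUnder (· ≤ ·) atTop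
      (fun p : ℕ => (p:ℝ) ^ (-(1 - ε')) *
        ∫ ω, ⨆ i : Fin p, (θ i + Z i ω / Real.sqrt (τ i)) ^ 2 ∂μ) := by
  obtain ⟨ε, hε, hθavg⟩ := hiii
  obtain ⟨Cθ, hCθ, hθ⟩ :=
    exists_forall_le_mul_of_isBoundedUnder_average (fun i => by positivity) hθavg
  obtain ⟨Cτ, hCτ, hτC⟩ :=
    exists_forall_le_mul_of_isBoundedUnder_average (fun i => by positivity) hi
  have hZtail : ∀ i, ∀ t > 0, μ {ω | t < Z i ω ^ 2} ≤ ENNReal.ofReal (D * t ^ (-(α / 2))) :=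
    fun i t ht => calc
      μ {ω | t < Z i ω ^ 2} = μ {ω | t < Z 0 ω ^ 2} :=
        (hid i).measure_mem_eq (s := {x | t < x ^ 2})
          (measurableSet_lt (by fun_prop) (by fun_prop))
      _ ≤ _ := measure_lt_sq_le_of_measure_lt_abs_le htail ht
  have ha : 2 / (2 + ε) < 1 := by rw [div_lt_one (by positivity)]; linarith
  have hb : 1 / 2 + (α / 2)⁻¹ < 1 := by
    have : (α / 2)⁻¹ < 1 / 2 := by rw [inv_lt_comm₀ (by positivity) (by positivity)]; linarith
    linarith
  set a := 2 / (2 + ε)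
  set b := 1 / 2 + (α / 2)⁻¹
  have hβ : 0 < α / 2 - 1 := by linarith
  refine ⟨min (1 - a) (1 - b), lt_min (by linarith) (by linarith),
    isBoundedUnder_rpow_neg_mul_of_le_add (a := a) (b := b)
      (c₁ := 2 * Cθ ^ a) (c₂ := 2 * √Cτ * (α / 2 / (α / 2 - 1) * D ^ (α / 2)⁻¹))
      (by linarith [min_le_left (1 - a) (1 - b)]) (by linarith [min_le_right (1 - a) (1 - b)])
      (by positivity) (by positivity) ?_⟩
  filter_upwards [hθ, hτC, eventually_gt_atTop 0] with p hθp hτp hp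
  have : Nonempty (Fin p) := ⟨⟨0, hp⟩⟩
  have hθi (i : Fin p) : θ i ^ 2 ≤ (Cθ * p) ^ a :=
    sq_le_rpow_of_abs_rpow_le (by positivity) (hθp i i.isLt)
  have hτi (i : Fin p) : 1 / τ i ≤ √(Cτ * p) :=
    (Real.le_sqrt (one_div_pos.2 (hτ i)).le (by positivity)).2
      (by simpa only [div_pow, one_pow] using hτp i i.isLt)
  calc ∫ ω, ⨆ i : Fin p, (θ i + Z i ω / √(τ i)) ^ 2 ∂μ
      ≤ 2 * (Cθ * p) ^ a +
          2 * √(Cτ * p) * (α / 2 / (α / 2 - 1) * (Fintype.card (Fin p) * D) ^ (α / 2)⁻¹) :=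
        integral_ciSup_sq_add_div_sqrt_le (fun i : Fin p => (hid i).aemeasurable_fst)
          (fun i => hτ i) hθi hτi hD (by linarith) fun i => hZtail i
    _ = 2 * Cθ ^ a * (p : ℝ) ^ a +
          2 * √Cτ * (α / 2 / (α / 2 - 1) * D ^ (α / 2)⁻¹) * (p : ℝ) ^ b := by
      rw [Fintype.card_fin, Real.mul_rpow hCθ (Nat.cast_nonneg p), Real.sqrt_mul hCτ,
        Real.mul_rpow (Nat.cast_nonneg p) hD.le, Real.rpow_add (by positivity),
        Real.sqrt_eq_rpow (p : ℝ)]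
      ring

/-- in the location-scale family `Y i = θ i + Z i / √(τ i)` with
i.i.d. mean-zero `Z i` of variance `ν₀` and polynomial tails, under conditions
(i)-(iii) there is `ε' > 0` with `limsup p^{-(1-ε')} E(max_{i<p} Y_i²) < ∞`. -/
theorem stmt11 {Ω : Type*} [MeasurableSpace Ω] (μ : Measure Ω) [IsProbabilityMeasure μ]
    (Z : ℕ → Ω → ℝ) (θ τ : ℕ → ℝ) (ν0 D α : ℝ)
    (hτ : ∀ i, 0 < τ i)
    (hind : iIndepFun Z μ)
    (hid : ∀ i, IdentDistrib (Z i) (Z 0) μ μ)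
    (hmean0 : ∫ ω, Z 0 ω ∂μ = 0) (hvarZ : variance (Z 0) μ = ν0)
    (hi : IsBoundedUnder (· ≤ ·) atTop
      (fun p : ℕ => (1 / (p:ℝ)) * ∑ i ∈ Finset.range p, 1 / τ i ^ 2))
    (hii : IsBoundedUnder (· ≤ ·) atTop
      (fun p : ℕ => (1 / (p:ℝ)) * ∑ i ∈ Finset.range p, θ i ^ 2 / τ i))
    (hiii : ∃ ε > (0:ℝ), IsBoundedUnder (· ≤ ·) atTop
      (fun p : ℕ => (1 / (p:ℝ)) * ∑ i ∈ Finset.range p, |θ i| ^ (2 + ε)))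
    (hD : 0 < D) (hα : 4 < α)
    (htail : ∀ t > (0:ℝ), (μ {ω | t < |Z 0 ω|}).toReal ≤ D * t ^ (-α)) :
    ∃ ε' > (0:ℝ), IsBoundedUnder (· ≤ ·) atTop
      (fun p : ℕ => (p:ℝ) ^ (-(1 - ε')) *
        ∫ ω, ⨆ i : Fin p, (θ i + Z i ω / Real.sqrt (τ i)) ^ 2 ∂μ) :=
  stmt11_general μ Z θ τ D α hτ hid hi hiii hD hα htail
end
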